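/- Let W be a real k×n matrix of full rank k, and let P = (WWᵀ)^{1/2} be the unique symmetric positive definite square root of WWᵀ. Then P⁻¹ W A = W if and only if (W, P) is an equilibrium point of the synaptic ODE (i.e., P⁻¹WA = W and P⁻¹WAWᵀP⁻¹ = P). Equivalently, the gradient of the potential V, given by ∇V(W) = W − (WWᵀ)^{−1/2} W A, vanishes at a full-rank W if and only if (W, (WWᵀ)^{1/2}) is an equilibrium point. -/

import Mathlib

open Matrix
open scoped Matrix Classical

/-- The unique symmetric positive semidefinite square root of a positive semidefinite real
matrix (junk value `0` on matrices that are not positive semidefinite). -/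
noncomputable def msqrt {k : ℕ} (S : Matrix (Fin k) (Fin k) ℝ) : Matrix (Fin k) (Fin k) ℝ :=
  if h : S.PosSemidef then (h.1.eigenvectorUnitary : Matrix (Fin k) (Fin k) ℝ) *
    diagonal ((↑) ∘ (√·) ∘ h.1.eigenvalues) *
    (star h.1.eigenvectorUnitary : Matrix (Fin k) (Fin k) ℝ) else 0

/-- An equilibrium point of the synaptic ODE: a pair `(W, M)` with `M` symmetric positive
definite satisfying `M⁻¹WA = W` and `M⁻¹WAWᵀM⁻¹ = M`. -/
def IsEquilibrium {k n : ℕ} (A : Matrix (Fin n) (Fin n) ℝ)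
    (W : Matrix (Fin k) (Fin n) ℝ) (M : Matrix (Fin k) (Fin k) ℝ) : Prop :=
  M.PosDef ∧ M⁻¹ * W * A = W ∧ M⁻¹ * W * A * Wᵀ * M⁻¹ = M

lemma aux_posDef_of_posSemidef_isUnit {k : ℕ} {S : Matrix (Fin k) (Fin k) ℝ}
    (hS : S.PosSemidef) (hu : IsUnit S) : S.PosDef := by
  refine PosDef.of_dotProduct_mulVec_pos hS.1 fun x hx => ?_
  refine (hS.dotProduct_mulVec_nonneg x).lt_of_ne' fun h => hx ?_
  have h0 : S *ᵥ x = 0 := (hS.dotProduct_mulVec_zero_iff x).mp h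
  have hinj : Function.Injective S.mulVec := mulVec_injective_iff_isUnit.mpr hu
  have : S *ᵥ x = S *ᵥ 0 := by simpa using h0
  exact hinj this

lemma aux_rank_isUnit {k : ℕ} {S : Matrix (Fin k) (Fin k) ℝ} (h : S.rank = k) : IsUnit S := by
  rw [← mulVec_surjective_iff_isUnit]
  have : LinearMap.range S.mulVecLin = ⊤ := by
    apply Submodule.eq_top_of_finrank_eq
    rw [← Matrix.rank, h]
    simp [Module.finrank_fintype_fun_eq_card]
  intro y
  obtain ⟨x, hx⟩ := LinearMap.range_eq_top.mp this y
  exact ⟨x, hx⟩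

/-- For a full-rank `W` with `P = (WWᵀ)^{1/2}`: `P⁻¹WA = W` iff `(W, P)` is an
equilibrium point; equivalently, the gradient `∇V(W) = W − (WWᵀ)^{−1/2}WA` of the
potential vanishes iff `(W, (WWᵀ)^{1/2})` is an equilibrium point. -/
theorem gradient_zero_iff_equilibrium {k n : ℕ} (hk : 0 < k) (hkn : k < n)
    (A : Matrix (Fin n) (Fin n) ℝ) (hA : A.PosDef)
    (W : Matrix (Fin k) (Fin n) ℝ) (hW : W.rank = k) :
    ((msqrt (W * Wᵀ))⁻¹ * W * A = W ↔ IsEquilibrium A W (msqrt (W * Wᵀ))) ∧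
    (W - (msqrt (W * Wᵀ))⁻¹ * W * A = 0 ↔ IsEquilibrium A W (msqrt (W * Wᵀ))) := by
  have hSsd : (W * Wᵀ).PosSemidef := by
    have := posSemidef_self_mul_conjTranspose W
    rwa [conjTranspose_eq_transpose_of_trivial] at this
  have hSrank : (W * Wᵀ).rank = k := by rw [rank_self_mul_transpose, hW]
  have hSu : IsUnit (W * Wᵀ) := aux_rank_isUnit hSrank
  have hP : msqrt (W * Wᵀ) = (hSsd.1.eigenvectorUnitary : Matrix (Fin k) (Fin k) ℝ) *
      diagonal ((↑) ∘ (√·) ∘ hSsd.1.eigenvalues) *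
      (star hSsd.1.eigenvectorUnitary : Matrix (Fin k) (Fin k) ℝ) := by rw [msqrt, dif_pos hSsd]
  set P := msqrt (W * Wᵀ) with hPdef
  have hPsd : P.PosSemidef := by
    rw [hP, star_eq_conjTranspose]
    refine PosSemidef.mul_mul_conjTranspose_same ?_ _
    refine PosSemidef.diagonal fun i => ?_
    simp only [Function.comp_apply, Pi.zero_apply]
    exact Real.sqrt_nonneg _
  have hPP : P * P = W * Wᵀ := by
    have hUU : (star hSsd.1.eigenvectorUnitary : Matrix (Fin k) (Fin k) ℝ) *
        (hSsd.1.eigenvectorUnitary : Matrix (Fin k) (Fin k) ℝ) = 1 := Unitary.coe_star_mul_self _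
    have hDD : diagonal ((↑) ∘ (√·) ∘ hSsd.1.eigenvalues) *
        diagonal ((↑) ∘ (√·) ∘ hSsd.1.eigenvalues) =
        diagonal (RCLike.ofReal ∘ hSsd.1.eigenvalues : Fin k → ℝ) := by
      rw [diagonal_mul_diagonal]
      congr 1
      funext i
      simp only [Function.comp_apply, RCLike.ofReal_real_eq_id, id]
      exact Real.mul_self_sqrt (hSsd.eigenvalues_nonneg i)
    rw [hP]
    conv_rhs => rw [hSsd.1.spectral_theorem, Unitary.conjStarAlgAut_apply]
    calc _ = (hSsd.1.eigenvectorUnitary : Matrix (Fin k) (Fin k) ℝ) *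
          (diagonal ((↑) ∘ (√·) ∘ hSsd.1.eigenvalues) *
          ((star hSsd.1.eigenvectorUnitary : Matrix (Fin k) (Fin k) ℝ) *
          (hSsd.1.eigenvectorUnitary : Matrix (Fin k) (Fin k) ℝ)) *
          diagonal ((↑) ∘ (√·) ∘ hSsd.1.eigenvalues)) *
          (star hSsd.1.eigenvectorUnitary : Matrix (Fin k) (Fin k) ℝ) := by
            simp only [mul_assoc]
      _ = _ := by rw [hUU, mul_one, hDD]
  have hPu : IsUnit P := by
    by_contra h
    have : ¬ IsUnit P.det := fun hd => h ((isUnit_iff_isUnit_det P).mpr hd)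
    have hdet : IsUnit (W * Wᵀ).det := (isUnit_iff_isUnit_det _).mp hSu
    rw [← hPP, det_mul] at hdet
    exact this (isUnit_of_mul_isUnit_left hdet)
  have hPpd : P.PosDef := aux_posDef_of_posSemidef_isUnit hPsd hPu
  have hPdet : IsUnit P.det := (isUnit_iff_isUnit_det P).mp hPu
  have key : P⁻¹ * W * A = W → IsEquilibrium A W P := by
    intro h
    refine ⟨hPpd, h, ?_⟩
    calc P⁻¹ * W * A * Wᵀ * P⁻¹ = W * Wᵀ * P⁻¹ := by rw [h]
      _ = P * P * P⁻¹ := by rw [hPP]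
      _ = P := by rw [mul_assoc, mul_nonsing_inv _ hPdet, mul_one]
  constructor
  · exact ⟨key, fun h => h.2.1⟩
  · rw [sub_eq_zero]
    exact ⟨fun h => key h.symm, fun h => h.2.1.symm⟩
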